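/- The rule Contraction (from E⃗,G,G ∘̸– F infer E⃗,G ∘̸– F) is uniform-constructively sound. -/

import Mathlib

namespace CoL

attribute [local instance 10] Classical.propDecidable

noncomputable section

/-! ## Players, moves, runs -/

/-- The two players: the machine `⊤` and the environment `⊥`. -/
inductive Player where
  | top
  | bot
deriving DecidableEq, Inhabited

/-- The adversary of a player. -/
def Player.opp : Player → Player
  | .top => .bot
  | .bot => .top

/-- Moves, with enough structure for choice/parallel/dfb-style prefixed moves. -/
inductive Move where
  | choice : ℕ → Move
  | par : Bool → Move → Move
  | succd : Move → Move
  | ante : List Bool → Move → Move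
  | repl : List Bool → Move
deriving DecidableEq, Inhabited

/-- A labeled move: a move together with the player who made it. -/
structure Labmove where
  player : Player
  move : Move
deriving DecidableEq, Inhabited

/-- A run: a finite or infinite sequence of labeled moves.  A position is a finite run,
represented by a `List Labmove`. -/
inductive RunT where
  | fin : List Labmove → RunT
  | inf : (ℕ → Labmove) → RunT

namespace RunT

def get : RunT → ℕ → Option Labmove
  | .fin l, n => l[n]?
  | .inf f, n => some (f n)

def take : RunT → ℕ → List Labmove
  | .fin l, n => l.take n
  | .inf f, n => (List.range n).map f

def hasPrefix (Γ : RunT) (Φ : List Labmove) : Prop := Γ.take Φ.length = Φ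

end RunT

/-- Switch the label of a labmove to the adversary's. -/
def Labmove.flip (lm : Labmove) : Labmove := ⟨lm.player.opp, lm.move⟩

def RunT.flip : RunT → RunT
  | .fin l => .fin (l.map Labmove.flip)
  | .inf f => .inf fun n => (f n).flip

theorem not_infinite_bound {P : ℕ → Prop} (h : ¬ (setOf P).Infinite) :
    ∃ N : ℕ, ∀ n, P n → n < N := by
  rw [Set.not_infinite] at h
  obtain ⟨N, hN⟩ := h.bddAbove
  exact ⟨N + 1, fun n hn => Nat.lt_succ_of_le (hN hn)⟩

/-- The subsequence of a run obtained by a partial relabeling function, with the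
surviving moves reindexed consecutively (in the original order). -/
def RunT.fmap (g : Labmove → Option Labmove) : RunT → RunT
  | .fin l => .fin (l.filterMap g)
  | .inf f =>
    if h : {n | (g (f n)).isSome = true}.Infinite then
      .inf fun k => (g (f (Nat.nth (fun n => (g (f n)).isSome = true) k))).getD default
    else
      .fin ((List.range (not_infinite_bound h).choose).filterMap fun n => g (f n))

/-- A run contains only finitely many labmoves satisfying `P`. -/
def RunT.finMany (P : Labmove → Prop) : RunT → Prop
  | .fin _ => True
  | .inf f => {n | P (f n)}.Finite

/-- The position (index) of the `k`-th (0-based) natural number satisfying `P`,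
if it exists. -/
def kthIdx (P : ℕ → Prop) (k : ℕ) : Option ℕ :=
  if h : ∃ n, P n ∧ {m | m < n ∧ P m}.ncard = k then some (Nat.find h) else none

/-! ## Constant games -/

/-- A constant game: a set of legal (finite) positions together with a winner
function on runs.  (Legality of arbitrary runs is derived: a run is legal iff all its
finite initial segments are legal positions.) -/
structure ConstGame where
  legalPos : List Labmove → Prop
  wn : RunT → Player

namespace ConstGame

/-- A run is legal iff every finite initial segment of it is a legal position. -/
def legal (A : ConstGame) (Γ : RunT) : Prop := ∀ n, A.legalPos (Γ.take n)

/-- A run is `p`-illegal iff the last move of its shortest illegal initial segment is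
`p`-labeled. -/
def illegalFor (A : ConstGame) (p : Player) (Γ : RunT) : Prop :=
  ∃ (Φ : List Labmove) (lm : Labmove),
    Γ.hasPrefix (Φ ++ [lm]) ∧ A.legalPos Φ ∧ ¬ A.legalPos (Φ ++ [lm]) ∧ lm.player = p

/-- A run is won by `p` iff it is illegal with the adversary the offender, or it is a
legal run whose winner is `p`. -/
def wonBy (A : ConstGame) (p : Player) (Γ : RunT) : Prop :=
  A.illegalFor p.opp Γ ∨ (A.legal Γ ∧ A.wn Γ = p)

end ConstGame

/-- The `n`-th entry of the run exists and is `q`-labeled. -/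
def RunT.playerAt (Γ : RunT) (q : Player) (n : ℕ) : Prop :=
  ∃ lm, Γ.get n = some lm ∧ lm.player = q

/-- Index of the `k`-th `q`-labeled move of a run. -/
def RunT.kthPlayerIdx (Γ : RunT) (q : Player) (k : ℕ) : Option ℕ := kthIdx (Γ.playerAt q) k

/-- The `k`-th `q`-labeled move of a run. -/
def RunT.kthPlayerMove (Γ : RunT) (q : Player) (k : ℕ) : Option Move :=
  (Γ.kthPlayerIdx q k).bind fun n => (Γ.get n).map Labmove.move

/-- `Δ` is a `p`-delay of `Γ`: both players' subsequences of moves agree, and whenever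
the `k`-th `p`-labeled move occurs later than the `n`-th `¬p`-labeled move in `Γ`,
so does it in `Δ`. -/
def IsDelay (p : Player) (Γ Δ : RunT) : Prop :=
  (∀ (q : Player) (k : ℕ), Γ.kthPlayerMove q k = Δ.kthPlayerMove q k) ∧
  (∀ (k n a b c d : ℕ),
    Γ.kthPlayerIdx p k = some a → Γ.kthPlayerIdx p.opp n = some b →
    Δ.kthPlayerIdx p k = some c → Δ.kthPlayerIdx p.opp n = some d →
    b < a → d < c)

/-- A constant game is static. -/
def ConstGame.Static (A : ConstGame) : Prop :=
  ∀ (p : Player) (Γ Δ : RunT), IsDelay p Γ Δ →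
    (¬ A.illegalFor p Γ → ¬ A.illegalFor p Δ) ∧ (A.wonBy p Γ → A.wonBy p Δ)

/-- Valuations: assignments of constants (natural numbers) to variables. -/
abbrev Valuation := ℕ → ℕ

/-- A game: a function from valuations to constant games. -/
abbrev Game := Valuation → ConstGame

/-- A game is static iff all of its instances are. -/
def Game.Static (A : Game) : Prop := ∀ e, (A e).Static

/-! ## Machines: EPMs and BMEPMs -/

/-- An action of an EPM at a step: make a (single) move, grant permission, or keep
computing. -/
inductive EAct where
  | move : Move → EAct
  | permit
  | think

/-- An easy-play machine, abstracted as a deterministic interactive algorithm: its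
action is a function of the valuation, the current position (run-tape content), and the
clock cycle. -/
structure EPM where
  act : Valuation → List Labmove → ℕ → EAct

/-- The position after `t` steps of a play of EPM `M` on valuation `e`, where `env t`
is the environment's (optional, single) response upon a permission granted at step
`t`. -/
def EPM.pos (M : EPM) (e : Valuation) (env : ℕ → Option Move) : ℕ → List Labmove
  | 0 => []
  | t + 1 =>
    match M.act e (M.pos e env t) t with
    | .move m => M.pos e env t ++ [⟨.top, m⟩]
    | .permit => M.pos e env t ++ (env t).toList.map fun m => ⟨.bot, m⟩
    | .think => M.pos e env t

def spelledGet (pos : ℕ → List Labmove) (n : ℕ) : Option Labmove :=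
  if h : ∃ t, n < (pos t).length then (pos (Nat.find h))[n]? else none

/-- The run incrementally spelled by a monotone sequence of positions. -/
def spelled (pos : ℕ → List Labmove) : RunT :=
  if h : ∃ t, ∀ s, (pos s).length ≤ (pos t).length then .fin (pos (Nat.find h))
  else .inf fun n => (spelledGet pos n).getD default

/-- A computation branch is fair iff permission is granted infinitely many times. -/
def EPM.Fair (M : EPM) (e : Valuation) (env : ℕ → Option Move) : Prop :=
  ∀ N, ∃ t, N ≤ t ∧ M.act e (M.pos e env t) t = .permit

/-- `M ⊨ₑ A`: machine `M` wins game `A` on valuation `e`. -/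
def EPM.WinsOn (M : EPM) (A : Game) (e : Valuation) : Prop :=
  ∀ env : ℕ → Option Move,
    ¬ (A e).illegalFor .bot (spelled (M.pos e env)) →
      M.Fair e env ∧ (A e).wonBy .top (spelled (M.pos e env))

/-- `M ⊨ A`: `M` wins `A` on every valuation. -/
def EPM.Wins (M : EPM) (A : Game) : Prop := ∀ e, M.WinsOn A e

/-- An action of a block-move EPM: make a finite block of moves, grant permission, or
keep computing. -/
inductive BAct where
  | moves : List Move → BAct
  | permit
  | think

/-- A block-move EPM: like an EPM, but either player may make a finite block of moves
at a time. -/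
structure BMEPM where
  act : Valuation → List Labmove → ℕ → BAct

def BMEPM.pos (M : BMEPM) (e : Valuation) (env : ℕ → List Move) : ℕ → List Labmove
  | 0 => []
  | t + 1 =>
    match M.act e (M.pos e env t) t with
    | .moves ms => M.pos e env t ++ ms.map fun m => ⟨.top, m⟩
    | .permit => M.pos e env t ++ (env t).map fun m => ⟨.bot, m⟩
    | .think => M.pos e env t

def BMEPM.Fair (M : BMEPM) (e : Valuation) (env : ℕ → List Move) : Prop :=
  ∀ N, ∃ t, N ≤ t ∧ M.act e (M.pos e env t) t = .permit

/-- `M ⊨ₑ A` for a BMEPM. -/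
def BMEPM.WinsOn (M : BMEPM) (A : Game) (e : Valuation) : Prop :=
  ∀ env : ℕ → List Move,
    ¬ (A e).illegalFor .bot (spelled (M.pos e env)) →
      M.Fair e env ∧ (A e).wonBy .top (spelled (M.pos e env))

def BMEPM.Wins (M : BMEPM) (A : Game) : Prop := ∀ e, M.WinsOn A e

/-- A game is computable iff some EPM wins it. -/
def Game.Computable (A : Game) : Prop := ∃ M : EPM, M.Wins A

/-! ## Game operations -/

/-- The elementary game with no nonempty legal runs, won by `⊤` iff `P` holds. -/
def elemGame (P : Prop) : ConstGame where
  legalPos Φ := Φ = []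
  wn _ := if P then .top else .bot

/-- Negation: the roles of the two players are interchanged. -/
def gNeg (A : ConstGame) : ConstGame where
  legalPos Φ := A.legalPos (Φ.map Labmove.flip)
  wn Γ := (A.wn Γ.flip).opp

def projPar (b : Bool) : Labmove → Option Labmove
  | ⟨p, .par b' β⟩ => if b' = b then some ⟨p, β⟩ else none
  | _ => none

/-- Parallel (binary) conjunction of constant games. -/
def gameAnd (A B : ConstGame) : ConstGame where
  legalPos Φ :=
    (∀ lm ∈ Φ, ∃ b β, lm.move = Move.par b β) ∧
    A.legalPos (Φ.filterMap (projPar false)) ∧ B.legalPos (Φ.filterMap (projPar true))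
  wn Γ :=
    if A.wn (Γ.fmap (projPar false)) = .top ∧ B.wn (Γ.fmap (projPar true)) = .top
    then .top else .bot

/-- Choice conjunction over an index set `S`: `⊥` chooses `n ∈ S` and play continues
in `f n`; if no choice is ever made, `⊤` wins. -/
def gameCAnd (S : Set ℕ) (f : ℕ → ConstGame) : ConstGame where
  legalPos := fun Φ =>
    match Φ with
    | [] => True
    | ⟨.bot, .choice n⟩ :: rest => n ∈ S ∧ (f n).legalPos rest
    | _ => False
  wn := fun Γ =>
    match Γ with
    | .fin [] => .top
    | .fin (⟨.bot, .choice n⟩ :: rest) => (f n).wn (.fin rest)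
    | .fin (_ :: _) => .top
    | .inf g =>
      match g 0 with
      | ⟨.bot, .choice n⟩ => (f n).wn (.inf fun k => g (k + 1))
      | _ => .top

/-- Blind universal quantification (for unistructural families of games). -/
def gameAll (f : ℕ → ConstGame) : ConstGame where
  legalPos Φ := ∀ c, (f c).legalPos Φ
  wn Γ := if ∀ c, (f c).wn Γ = .top then .top else .bot

/-! ## Trees of games and dfb-reduction -/

/-- A tree of (constant) games. -/
inductive GTree where
  | leaf : ConstGame → GTree
  | node : GTree → GTree → GTree

/-- The leaves of a tree of games, together with their (bit-string) addresses. -/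
def GTree.leaves : GTree → List (List Bool × ConstGame)
  | .leaf A => [([], A)]
  | .node l r =>
      (l.leaves.map fun p => (false :: p.1, p.2)) ++ (r.leaves.map fun p => (true :: p.1, p.2))

/-- `w` is a prefix of the infinite bit string `x`. -/
def prefInf (w : List Bool) (x : ℕ → Bool) : Prop :=
  ∀ (i : ℕ) (hi : i < w.length), w.get ⟨i, hi⟩ = x i

/-- Projection to the succedent: keep labmoves `℘S.β`, stripping the prefix. -/
def projS : Labmove → Option Labmove
  | ⟨p, .succd β⟩ => some ⟨p, β⟩
  | _ => none

/-- Projection along an infinite bit string `x`: keep labmoves `℘w.β` with `w ≼ x`,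
stripping the prefix. -/
def projA (x : ℕ → Bool) : Labmove → Option Labmove
  | ⟨p, .ante w β⟩ => if prefInf w x then some ⟨p, β⟩ else none
  | _ => none

/-- Shape/precedence conditions on the `i`-th labmove of a position of a dfb-reduction
(conditions 1-3 of the definition of dfb-reduction). -/
def dfbShape (T : GTree) (Φ : List Labmove) (i : ℕ) : Labmove → Prop
  | ⟨_, .succd _⟩ => True
  | ⟨.top, .repl w⟩ =>
      (∃ p ∈ T.leaves, p.1 = w) ∨
      (w ≠ [] ∧ ∃ j < i, Φ[j]? = some ⟨.top, .repl w.dropLast⟩)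
  | ⟨.bot, .repl _⟩ => False
  | ⟨_, .ante w _⟩ =>
      (∃ p ∈ T.leaves, w <+: p.1) ∨
      (w ≠ [] ∧ ∃ j < i, Φ[j]? = some ⟨.top, .repl w.dropLast⟩)
  | ⟨_, .choice _⟩ => False
  | ⟨_, .par _ _⟩ => False

/-- Legal positions of the dfb-reduction `T ∘̸– B`. -/
def dfbLegalPos (T : GTree) (B : ConstGame) (Φ : List Labmove) : Prop :=
  (∀ (i : ℕ) (lm : Labmove), Φ[i]? = some lm → dfbShape T Φ i lm) ∧
  (∀ w : List Bool, Φ.count ⟨Player.top, Move.repl w⟩ ≤ 1) ∧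
  B.legalPos (Φ.filterMap projS) ∧
  (∀ p ∈ T.leaves, ∀ x : ℕ → Bool, prefInf p.1 x →
      (gNeg p.2).legalPos (Φ.filterMap (projA x)))

/-- Replicative labmoves. -/
def isReplMove (lm : Labmove) : Prop := ∃ w, lm.move = Move.repl w

/-- The dfb-reduction of game `B` to the tree of games `T`.  `⊤` wins a legal run iff
it has made only finitely many replications and either wins in the succedent or wins
(as `⊥`) in some antecedental leaf. -/
def dfb (T : GTree) (B : ConstGame) : ConstGame where
  legalPos := dfbLegalPos T B
  wn Γ :=
    if Γ.finMany isReplMove ∧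
       (B.wn (Γ.fmap projS) = .top ∨
        ∃ p ∈ T.leaves, ∃ x : ℕ → Bool, prefInf p.1 x ∧
          (gNeg p.2).wn (Γ.fmap (projA x)) = .top)
    then .top else .bot

/-! ## Syntax: terms, formulas, sequents -/

/-- Function symbols: an arity and an index (infinitely many of each arity). -/
structure FuncSym where
  ar : ℕ
  idx : ℕ
deriving DecidableEq

/-- Predicate symbols: the logical symbol `=` plus infinitely many nonlogical symbols
of each arity. -/
inductive PredSym where
  | eq
  | pred : ℕ → ℕ → PredSym
deriving DecidableEq

def PredSym.arity : PredSym → ℕ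
  | .eq => 2
  | .pred n _ => n

/-- Terms: variables, constants (decimal numerals, i.e. natural numbers), and
applications of function symbols. -/
inductive Term where
  | var : ℕ → Term
  | const : ℕ → Term
  | func : (f : FuncSym) → (Fin f.ar → Term) → Term

/-- Formulas.  `¬` is only applied to atoms: an atom carries a polarity bit
(`true` = negated).  `→` is an abbreviation (see `Fml.imp`). -/
inductive Fml where
  | tt
  | ff
  | atom : Bool → (p : PredSym) → (Fin p.arity → Term) → Fml
  | and : Fml → Fml → Fml
  | or : Fml → Fml → Fml
  | cand : Fml → Fml → Fml
  | cor : Fml → Fml → Fml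
  | all : ℕ → Fml → Fml
  | ex : ℕ → Fml → Fml
  | call : ℕ → Fml → Fml
  | cex : ℕ → Fml → Fml

def duo {α : Sort*} (a b : α) : Fin 2 → α := fun i => if i.val = 0 then a else b

/-- An interpretation: sends function symbols to functions on `ℕ` and predicate symbols
to elementary games (predicates), such that `=` is interpreted as an equivalence
relation preserved by all interpreted functions and respected by all interpreted
predicates. -/
structure Interp where
  fn : (f : FuncSym) → (Fin f.ar → ℕ) → ℕ
  pr : (p : PredSym) → (Fin p.arity → ℕ) → Prop
  eq_equiv : Equivalence fun a b => pr .eq (duo a b)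
  fn_congr : ∀ (f : FuncSym) (u v : Fin f.ar → ℕ),
      (∀ i, pr .eq (duo (u i) (v i))) → pr .eq (duo (fn f u) (fn f v))
  pr_congr : ∀ (p : PredSym) (u v : Fin p.arity → ℕ),
      (∀ i, pr .eq (duo (u i) (v i))) → (pr p u ↔ pr p v)

def Term.eval (I : Interp) (e : Valuation) : Term → ℕ
  | .var x => e x
  | .const c => c
  | .func f ts => I.fn f fun i => (ts i).eval I e

def Valuation.upd (e : Valuation) (x c : ℕ) : Valuation := fun y => if y = x then c else e y

/-- The game `F*` represented by a formula `F` under an interpretation `*`. -/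
def Fml.game (I : Interp) : Fml → Valuation → ConstGame
  | .tt, _ => elemGame True
  | .ff, _ => elemGame False
  | .atom b p a, e => elemGame ((I.pr p fun i => (a i).eval I e) ↔ b = false)
  | .and A B, e => gameAnd (A.game I e) (B.game I e)
  | .or A B, e => gNeg (gameAnd (gNeg (A.game I e)) (gNeg (B.game I e)))
  | .cand A B, e => gameCAnd {n | n = 0 ∨ n = 1} fun n =>
      if n = 0 then A.game I e else B.game I e
  | .cor A B, e => gNeg (gameCAnd {n | n = 0 ∨ n = 1} fun n =>
      gNeg (if n = 0 then A.game I e else B.game I e))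
  | .all x A, e => gameAll fun c => A.game I (e.upd x c)
  | .ex x A, e => gNeg (gameAll fun c => gNeg (A.game I (e.upd x c)))
  | .call x A, e => gameCAnd Set.univ fun c => A.game I (e.upd x c)
  | .cex x A, e => gNeg (gameCAnd Set.univ fun c => gNeg (A.game I (e.upd x c)))

/-- A sequent `E₁,…,Eₙ ∘̸– F` with a list antecedent (standard-tree form). -/
structure Sequent where
  ante : List Fml
  succ : Fml

/-- The standard (right-nested) tree with the given yield. -/
def stdGTree (A : ConstGame) : List ConstGame → GTree
  | [] => .leaf A
  | B :: rest => .node (.leaf A) (stdGTree B rest)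

/-- The game represented by a sequent: the dfb-reduction of the succedent to the
standard tree of the antecedent (the succedent itself if the antecedent is empty). -/
def Sequent.game (I : Interp) (S : Sequent) : Game := fun e =>
  match S.ante with
  | [] => S.succ.game I e
  | E :: rest => dfb (stdGTree (E.game I e) (rest.map fun G => G.game I e)) (S.succ.game I e)

/-! ## Uniform-constructive soundness of rules -/

/-- A rule (a relation between lists of premise sequents and conclusion sequents) is
uniform-constructively sound iff there is an (effective) procedure turning machines
winning the premises under an interpretation into a machine winning the conclusion
under the same interpretation. -/
def UCSound (R : List Sequent → Sequent → Prop) : Prop :=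
  ∃ F : List Sequent → Sequent → List BMEPM → BMEPM,
    ∀ (Xs : List Sequent) (X0 : Sequent) (Ms : List BMEPM),
      R Xs X0 → Ms.length = Xs.length →
      ∀ (I : Interp) (e : Valuation),
        (∀ (i : ℕ) (hx : i < Xs.length) (hm : i < Ms.length),
            (Ms[i]'hm).WinsOn ((Xs[i]'hx).game I) e) →
        (F Xs X0 Ms).WinsOn (X0.game I) e

/-! ## Trees of formulas and general sequents -/

/-- A (nonempty) tree of formulas. -/
inductive FTree where
  | leaf : Fml → FTree
  | node : FTree → FTree → FTree

/-- The yield of a tree of formulas. -/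
def FTree.yield : FTree → List Fml
  | .leaf F => [F]
  | .node l r => l.yield ++ r.yield

def FTree.toGTree (I : Interp) (e : Valuation) : FTree → GTree
  | .leaf F => .leaf (F.game I e)
  | .node l r => .node (l.toGTree I e) (r.toGTree I e)

/-- A sequent whose antecedent is an arbitrary (possibly empty) tree of formulas. -/
structure TSeq where
  ante : Option FTree
  succ : Fml

def TSeq.game (I : Interp) (S : TSeq) : Game := fun e =>
  match S.ante with
  | none => S.succ.game I e
  | some T => dfb (T.toGTree I e) (S.succ.game I e)

def stdFTree1 (F : Fml) : List Fml → FTree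
  | [] => .leaf F
  | G :: rest => .node (.leaf F) (stdFTree1 G rest)

/-- The standard tree of formulas with a given yield. -/
def stdFTree : List Fml → Option FTree
  | [] => none
  | F :: rest => some (stdFTree1 F rest)

/-- Uniform-constructive soundness, for rules on tree-antecedent sequents. -/
def UCSoundT (R : List TSeq → TSeq → Prop) : Prop :=
  ∃ F : List TSeq → TSeq → List BMEPM → BMEPM,
    ∀ (Xs : List TSeq) (X0 : TSeq) (Ms : List BMEPM),
      R Xs X0 → Ms.length = Xs.length →
      ∀ (I : Interp) (e : Valuation),
        (∀ (i : ℕ) (hx : i < Xs.length) (hm : i < Ms.length),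
            (Ms[i]'hm).WinsOn ((Xs[i]'hx).game I) e) →
        (F Xs X0 Ms).WinsOn (X0.game I) e

/-! ## Substitution, occurrences -/

def Term.subst : Term → ℕ → Term → Term
  | .var y, x, t => if y = x then t else .var y
  | .const d, _, _ => .const d
  | .func f ts, x, t => .func f fun i => (ts i).subst x t

/-- Replace all free occurrences of variable `x` by term `t`. -/
def Fml.subst (x : ℕ) (t : Term) : Fml → Fml
  | .tt => .tt
  | .ff => .ff
  | .atom b p a => .atom b p fun i => (a i).subst x t
  | .and A B => .and (A.subst x t) (B.subst x t)
  | .or A B => .or (A.subst x t) (B.subst x t)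
  | .cand A B => .cand (A.subst x t) (B.subst x t)
  | .cor A B => .cor (A.subst x t) (B.subst x t)
  | .all y A => .all y (if y = x then A else A.subst x t)
  | .ex y A => .ex y (if y = x then A else A.subst x t)
  | .call y A => .call y (if y = x then A else A.subst x t)
  | .cex y A => .cex y (if y = x then A else A.subst x t)

def Term.hasVar (y : ℕ) : Term → Prop
  | .var x => x = y
  | .const _ => False
  | .func _ ts => ∃ i, (ts i).hasVar y

/-- `y` occurs (free, bound or as a binder) in the formula. -/
def Fml.mentionsVar (y : ℕ) : Fml → Prop
  | .tt => False
  | .ff => False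
  | .atom _ _ a => ∃ i, (a i).hasVar y
  | .and A B => A.mentionsVar y ∨ B.mentionsVar y
  | .or A B => A.mentionsVar y ∨ B.mentionsVar y
  | .cand A B => A.mentionsVar y ∨ B.mentionsVar y
  | .cor A B => A.mentionsVar y ∨ B.mentionsVar y
  | .all x A => x = y ∨ A.mentionsVar y
  | .ex x A => x = y ∨ A.mentionsVar y
  | .call x A => x = y ∨ A.mentionsVar y
  | .cex x A => x = y ∨ A.mentionsVar y

/-- `y` occurs as a bound variable (i.e. is used as a binder) in the formula. -/
def Fml.bindsVar (y : ℕ) : Fml → Prop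
  | .tt => False
  | .ff => False
  | .atom _ _ _ => False
  | .and A B => A.bindsVar y ∨ B.bindsVar y
  | .or A B => A.bindsVar y ∨ B.bindsVar y
  | .cand A B => A.bindsVar y ∨ B.bindsVar y
  | .cor A B => A.bindsVar y ∨ B.bindsVar y
  | .all x A => x = y ∨ A.bindsVar y
  | .ex x A => x = y ∨ A.bindsVar y
  | .call x A => x = y ∨ A.bindsVar y
  | .cex x A => x = y ∨ A.bindsVar y

/-- `y` occurs free in the formula. -/
def Fml.freeVar (y : ℕ) : Fml → Prop
  | .tt => False
  | .ff => False
  | .atom _ _ a => ∃ i, (a i).hasVar y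
  | .and A B => A.freeVar y ∨ B.freeVar y
  | .or A B => A.freeVar y ∨ B.freeVar y
  | .cand A B => A.freeVar y ∨ B.freeVar y
  | .cor A B => A.freeVar y ∨ B.freeVar y
  | .all x A => x ≠ y ∧ A.freeVar y
  | .ex x A => x ≠ y ∧ A.freeVar y
  | .call x A => x ≠ y ∧ A.freeVar y
  | .cex x A => x ≠ y ∧ A.freeVar y

def Sequent.mentionsVar (S : Sequent) (y : ℕ) : Prop :=
  (∃ E ∈ S.ante, E.mentionsVar y) ∨ S.succ.mentionsVar y

def Sequent.bindsVar (S : Sequent) (y : ℕ) : Prop :=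
  (∃ E ∈ S.ante, E.bindsVar y) ∨ S.succ.bindsVar y

/-! ## Elementarization, classical semantics, stability -/

/-- A formula is elementary iff it contains no choice operators. -/
def Fml.elementary : Fml → Prop
  | .tt => True
  | .ff => True
  | .atom _ _ _ => True
  | .and A B => A.elementary ∧ B.elementary
  | .or A B => A.elementary ∧ B.elementary
  | .cand _ _ => False
  | .cor _ _ => False
  | .all _ A => A.elementary
  | .ex _ A => A.elementary
  | .call _ _ => False
  | .cex _ _ => False

/-- The elementarization of a formula: replace all `⊔`/`⊔x`-subformulas by `⊥` and all
`⊓`/`⊓x`-subformulas by `⊤`. -/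
def Fml.elz : Fml → Fml
  | .tt => .tt
  | .ff => .ff
  | .atom b p a => .atom b p a
  | .and A B => .and A.elz B.elz
  | .or A B => .or A.elz B.elz
  | .cand _ _ => .tt
  | .cor _ _ => .ff
  | .all x A => .all x A.elz
  | .ex x A => .ex x A.elz
  | .call _ _ => .tt
  | .cex _ _ => .ff

/-- Standard (DeMorgan) negation of a formula. -/
def Fml.negF : Fml → Fml
  | .tt => .ff
  | .ff => .tt
  | .atom b p a => .atom (!b) p a
  | .and A B => .or A.negF B.negF
  | .or A B => .and A.negF B.negF
  | .cand A B => .cor A.negF B.negF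
  | .cor A B => .cand A.negF B.negF
  | .all x A => .ex x A.negF
  | .ex x A => .all x A.negF
  | .call x A => .cex x A.negF
  | .cex x A => .call x A.negF

/-- Implication as the standard abbreviation. -/
def Fml.imp (A B : Fml) : Fml := .or A.negF B

def bigAnd : Fml → List Fml → Fml
  | A, [] => A
  | A, B :: rest => .and A (bigAnd B rest)

/-- The elementarization of a sequent `G₁,…,Gₙ ∘̸– F`:
the elementary formula `‖G₁‖∧…∧‖Gₙ‖ → ‖F‖`. -/
def Sequent.elz (S : Sequent) : Fml :=
  match S.ante with
  | [] => S.succ.elz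
  | E :: rest => (bigAnd E.elz (rest.map Fml.elz)).imp S.succ.elz

/-- A classical first-order structure (with `=` interpreted as identity). -/
structure Struc where
  D : Type
  ne : Nonempty D
  cn : ℕ → D
  fn : (f : FuncSym) → (Fin f.ar → D) → D
  pr : (p : PredSym) → (Fin p.arity → D) → Prop
  eq_iden : ∀ a b : D, pr .eq (duo a b) ↔ a = b

def Term.evalS (St : Struc) (e : ℕ → St.D) : Term → St.D
  | .var x => e x
  | .const c => St.cn c
  | .func f ts => St.fn f fun i => (ts i).evalS St e

/-- Classical (Tarskian) truth of a formula in a structure under an assignment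
(choice operators are read classically; they do not occur in elementary formulas). -/
def Fml.trueIn (St : Struc) : Fml → (ℕ → St.D) → Prop
  | .tt, _ => True
  | .ff, _ => False
  | .atom b p a, e => ((St.pr p fun i => (a i).evalS St e) ↔ b = false)
  | .and A B, e => A.trueIn St e ∧ B.trueIn St e
  | .or A B, e => A.trueIn St e ∨ B.trueIn St e
  | .cand A B, e => A.trueIn St e ∧ B.trueIn St e
  | .cor A B, e => A.trueIn St e ∨ B.trueIn St e
  | .all x A, e => ∀ d, A.trueIn St fun y => if y = x then d else e y
  | .ex x A, e => ∃ d, A.trueIn St fun y => if y = x then d else e y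
  | .call x A, e => ∀ d, A.trueIn St fun y => if y = x then d else e y
  | .cex x A, e => ∃ d, A.trueIn St fun y => if y = x then d else e y

/-- Classical validity (= provability in classical predicate calculus with `=`, by
Gödel's completeness theorem). -/
def FValid (F : Fml) : Prop := ∀ (St : Struc) (e : ℕ → St.D), F.trueIn St e

/-- A sequent is stable iff its elementarization is classically valid. -/
def Sequent.stable (S : Sequent) : Prop := FValid S.elz

/-! ## The system CL12 -/

/-- Surface contexts: a formula with a hole not in the scope of any choice operator. -/
inductive FCtx where
  | hole
  | andL : FCtx → Fml → FCtx
  | andR : Fml → FCtx → FCtx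
  | orL : FCtx → Fml → FCtx
  | orR : Fml → FCtx → FCtx
  | allC : ℕ → FCtx → FCtx
  | exC : ℕ → FCtx → FCtx

def FCtx.fill : FCtx → Fml → Fml
  | .hole, H => H
  | .andL C B, H => .and (C.fill H) B
  | .andR A C, H => .and A (C.fill H)
  | .orL C B, H => .or (C.fill H) B
  | .orR A C, H => .or A (C.fill H)
  | .allC x C, H => .all x (C.fill H)
  | .exC x C, H => .ex x (C.fill H)

/-- `t` is a constant or a variable with no bound occurrences in the premise. -/
def TermOk (t : Term) (prem : Sequent) : Prop :=
  (∃ c, t = Term.const c) ∨ (∃ y, t = Term.var y ∧ ¬ prem.bindsVar y)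

/-- The single-premise rules of CL12: `⊓`-Choose, `⊔`-Choose, `⊓x`-Choose,
`⊔x`-Choose and Replicate.  `NonWaitStep Y X` means `X` follows from premise `Y`. -/
inductive NonWaitStep : Sequent → Sequent → Prop
  | candChoose (G K : List Fml) (C : FCtx) (H0 H1 : Fml) (i : Bool) (F : Fml) :
      NonWaitStep ⟨G ++ (C.fill (if i then H1 else H0)) :: K, F⟩
                  ⟨G ++ (C.fill (.cand H0 H1)) :: K, F⟩
  | corChoose (G : List Fml) (C : FCtx) (H0 H1 : Fml) (i : Bool) :
      NonWaitStep ⟨G, C.fill (if i then H1 else H0)⟩ ⟨G, C.fill (.cor H0 H1)⟩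
  | callChoose (G K : List Fml) (C : FCtx) (x : ℕ) (H : Fml) (t : Term) (F : Fml) :
      TermOk t ⟨G ++ (C.fill (H.subst x t)) :: K, F⟩ →
      NonWaitStep ⟨G ++ (C.fill (H.subst x t)) :: K, F⟩
                  ⟨G ++ (C.fill (.call x H)) :: K, F⟩
  | cexChoose (G : List Fml) (C : FCtx) (x : ℕ) (H : Fml) (t : Term) :
      TermOk t ⟨G, C.fill (H.subst x t)⟩ →
      NonWaitStep ⟨G, C.fill (H.subst x t)⟩ ⟨G, C.fill (.cex x H)⟩
  | replicate (G K : List Fml) (E F : Fml) :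
      NonWaitStep ⟨G ++ E :: K ++ [E], F⟩ ⟨G ++ E :: K, F⟩

/-- `Y` follows from the set `P` of premises by Wait. -/
def WaitStep (P : Set Sequent) (Y : Sequent) : Prop :=
  Y.stable ∧
  (∀ (C : FCtx) (H0 H1 : Fml), Y.succ = C.fill (.cand H0 H1) →
      (⟨Y.ante, C.fill H0⟩ : Sequent) ∈ P ∧ (⟨Y.ante, C.fill H1⟩ : Sequent) ∈ P) ∧
  (∀ (G K : List Fml) (C : FCtx) (H0 H1 : Fml),
      Y.ante = G ++ (C.fill (.cor H0 H1)) :: K →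
      (⟨G ++ (C.fill H0) :: K, Y.succ⟩ : Sequent) ∈ P ∧
      (⟨G ++ (C.fill H1) :: K, Y.succ⟩ : Sequent) ∈ P) ∧
  (∀ (C : FCtx) (x : ℕ) (H : Fml), Y.succ = C.fill (.call x H) →
      ∃ y, ¬ Y.mentionsVar y ∧
        (⟨Y.ante, C.fill (H.subst x (.var y))⟩ : Sequent) ∈ P) ∧
  (∀ (G K : List Fml) (C : FCtx) (x : ℕ) (H : Fml),
      Y.ante = G ++ (C.fill (.cex x H)) :: K →
      ∃ y, ¬ Y.mentionsVar y ∧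
        (⟨G ++ (C.fill (H.subst x (.var y))) :: K, Y.succ⟩ : Sequent) ∈ P)

/-- `X` follows from premises in `P` by one of the rules of CL12. -/
def CL12Step (P : Set Sequent) (X : Sequent) : Prop :=
  (∃ Y ∈ P, NonWaitStep Y X) ∨ WaitStep P X

/-- `L` is a CL12-proof of `X`: a nonempty sequence of sequents ending in `X` in which
every sequent follows from some earlier ones by a rule of CL12. -/
def IsCL12Proof (L : List Sequent) (X : Sequent) : Prop :=
  L ≠ [] ∧ L.getLast? = some X ∧
  ∀ (i : ℕ) (h : i < L.length), CL12Step {Y | Y ∈ L.take i} (L[i]'h)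

def CL12Proves (X : Sequent) : Prop := ∃ L, IsCL12Proof L X

/-- `Y` is a `⊥`-development of `X`. -/
inductive BotDev : Sequent → Sequent → Prop
  | c1 (E : List Fml) (C : FCtx) (H0 H1 : Fml) (i : Bool) :
      BotDev ⟨E, C.fill (.cand H0 H1)⟩ ⟨E, C.fill (if i then H1 else H0)⟩
  | c2 (E K : List Fml) (C : FCtx) (H0 H1 : Fml) (i : Bool) (F : Fml) :
      BotDev ⟨E ++ (C.fill (.cor H0 H1)) :: K, F⟩
             ⟨E ++ (C.fill (if i then H1 else H0)) :: K, F⟩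
  | c3 (E : List Fml) (C : FCtx) (x : ℕ) (H : Fml) (y : ℕ) :
      ¬ (Sequent.mk E (C.fill (.call x H))).mentionsVar y →
      BotDev ⟨E, C.fill (.call x H)⟩ ⟨E, C.fill (H.subst x (.var y))⟩
  | c4 (E K : List Fml) (C : FCtx) (x : ℕ) (H : Fml) (y : ℕ) (F : Fml) :
      ¬ (Sequent.mk (E ++ (C.fill (.cex x H)) :: K) F).mentionsVar y →
      BotDev ⟨E ++ (C.fill (.cex x H)) :: K, F⟩
             ⟨E ++ (C.fill (H.subst x (.var y))) :: K, F⟩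

/-- `Y` is a `⊤`-development of `X`: `X` follows from `Y` by a rule other than Wait. -/
def TopDev (X Y : Sequent) : Prop := NonWaitStep Y X

/-! ## Arithmetic: CLA1 and CLA2 -/

def fSucc : FuncSym := ⟨1, 0⟩
def fPlus : FuncSym := ⟨2, 0⟩
def fTimes : FuncSym := ⟨2, 1⟩

def tv (x : ℕ) : Term := .var x
def t0 : Term := .const 0
def tS (t : Term) : Term := .func fSucc fun _ => t
def tPlus (a b : Term) : Term := .func fPlus (duo a b)
def tTimes (a b : Term) : Term := .func fTimes (duo a b)
def fEq (a b : Term) : Fml := .atom false .eq (duo a b)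
def fNeq (a b : Term) : Fml := .atom true .eq (duo a b)

/-- The language of CLA1: only the constant `0`, the function symbols `'`, `+`, `×`
and the predicate symbol `=`. -/
def Term.inLangA : Term → Prop
  | .var _ => True
  | .const c => c = 0
  | .func f ts => (f = fSucc ∨ f = fPlus ∨ f = fTimes) ∧ ∀ i, (ts i).inLangA

def Fml.inLangA : Fml → Prop
  | .tt => True
  | .ff => True
  | .atom _ p a => p = .eq ∧ ∀ i, (a i).inLangA
  | .and A B => A.inLangA ∧ B.inLangA
  | .or A B => A.inLangA ∧ B.inLangA
  | .cand A B => A.inLangA ∧ B.inLangA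
  | .cor A B => A.inLangA ∧ B.inLangA
  | .all _ A => A.inLangA
  | .ex _ A => A.inLangA
  | .call _ A => A.inLangA
  | .cex _ A => A.inLangA

def Sequent.inLangA (S : Sequent) : Prop := (∀ E ∈ S.ante, E.inLangA) ∧ S.succ.inLangA

def allClose : List ℕ → Fml → Fml
  | [], F => F
  | v :: vs, F => .all v (allClose vs F)

def callClose : List ℕ → Fml → Fml
  | [], F => F
  | v :: vs, F => .call v (callClose vs F)

/-- The induction formula `F(0) ∧ ∀x(F(x)→F(x')) → ∀x F(x)`. -/
def indFml (F : Fml) (x : ℕ) : Fml :=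
  (Fml.and (F.subst x t0) (.all x (F.imp (F.subst x (tS (tv x)))))).imp (.all x F)

/-- The axioms of PA: the `∀`-closures of the six defining axioms of `'`, `+`, `×`
together with the induction scheme for elementary formulas (of the language `lang`). -/
inductive IsPAAx (lang : Fml → Prop) : Fml → Prop
  | a1 : IsPAAx lang (.all 0 (fNeq t0 (tS (tv 0))))
  | a2 : IsPAAx lang (.all 0 (.all 1 ((fEq (tS (tv 0)) (tS (tv 1))).imp (fEq (tv 0) (tv 1)))))
  | a3 : IsPAAx lang (.all 0 (fEq (tPlus (tv 0) t0) (tv 0)))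
  | a4 : IsPAAx lang (.all 0 (.all 1
      (fEq (tPlus (tv 0) (tS (tv 1))) (tS (tPlus (tv 0) (tv 1))))))
  | a5 : IsPAAx lang (.all 0 (fEq (tTimes (tv 0) t0) t0))
  | a6 : IsPAAx lang (.all 0 (.all 1
      (fEq (tTimes (tv 0) (tS (tv 1))) (tPlus (tTimes (tv 0) (tv 1)) (tv 0)))))
  | ind (vs : List ℕ) (F : Fml) (x : ℕ) :
      F.elementary → lang F → (∀ y, (indFml F x).freeVar y → y ∈ vs) →
      IsPAAx lang (allClose vs (indFml F x))

/-- Axiom 7 of CLA1: `⊓x⊔y(y = x')`. -/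
def axSeven : Fml := .call 0 (.cex 1 (fEq (tv 1) (tS (tv 0))))

/-- The axioms of a CL-based arithmetic: the PA axioms plus `⊓x⊔y(y = x')`. -/
def IsCLAAx (lang : Fml → Prop) (A : Fml) : Prop := IsPAAx lang A ∨ A = axSeven

def CLA1Ax : Fml → Prop := IsCLAAx Fml.inLangA
def CLA2Ax : Fml → Prop := IsCLAAx fun _ => True

/-- (Extended) natural deductions of the CL-based arithmetics: a deduction of `F` from
hypotheses `Γ`, where `lc` is Logical Consequence (carrying a CL12-proof of the
corresponding sequent, so that these deductions are *extended* proofs) and `ci` is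
Constructive Induction (with a fresh variable `x`). -/
inductive CLADed (ax : Fml → Prop) : List Fml → Fml → Type
  | hyp (Γ : List Fml) (F : Fml) : F ∈ Γ → CLADed ax Γ F
  | axm (Γ : List Fml) (F : Fml) : ax F → CLADed ax Γ F
  | lc (Γ Gs : List Fml) (F : Fml) (L : List Sequent) :
      IsCL12Proof L ⟨Gs, F⟩ → (∀ G ∈ Gs, CLADed ax Γ G) → CLADed ax Γ F
  | ci (Γ : List Fml) (F : Fml) (x : ℕ) :
      (∀ E ∈ Γ, ¬ E.mentionsVar x) →
      CLADed ax Γ (F.subst x t0) →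
      CLADed ax (F :: Γ) (F.subst x (tS (tv x))) →
      CLADed ax Γ (.call x F)

/-- Provability of the sequent `Γ ∘̸– F` in a CL-based arithmetic. -/
def CLAProves (ax : Fml → Prop) (Γ : List Fml) (F : Fml) : Prop := Nonempty (CLADed ax Γ F)

/-- The standard interpretation of the function symbols. -/
def stdFn (f : FuncSym) (v : Fin f.ar → ℕ) : ℕ :=
  if h : f = fSucc then v ⟨0, by rw [h]; exact Nat.zero_lt_one⟩ + 1
  else if h : f = fPlus then
    v ⟨0, by rw [h]; exact Nat.zero_lt_two⟩ + v ⟨1, by rw [h]; exact Nat.one_lt_two⟩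
  else if h : f = fTimes then
    v ⟨0, by rw [h]; exact Nat.zero_lt_two⟩ * v ⟨1, by rw [h]; exact Nat.one_lt_two⟩
  else 0

def stdPr (p : PredSym) (v : Fin p.arity → ℕ) : Prop :=
  match p, v with
  | .eq, v => v ⟨0, Nat.zero_lt_two⟩ = v ⟨1, Nat.one_lt_two⟩
  | .pred _ _, _ => False

/-- The standard interpretation `†`. -/
def stdInterp : Interp where
  fn := stdFn
  pr := stdPr
  eq_equiv := ⟨fun _ => rfl, fun h => h.symm, fun h1 h2 => h1.trans h2⟩
  fn_congr := fun f u v h => by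
    have huv : u = v := funext fun i => h i
    show stdFn f u = stdFn f v
    rw [huv]
  pr_congr := fun p u v h => by
    have huv : u = v := funext fun i => h i
    rw [huv]

/-- An interpretation is standard iff it interprets `=` as identity, `'` as successor,
`+` as sum and `×` as product. -/
def Interp.IsStandard (I : Interp) : Prop :=
  (∀ v : Fin 2 → ℕ, I.pr .eq v ↔ v 0 = v 1) ∧
  (∀ v : Fin 1 → ℕ, I.fn fSucc v = v 0 + 1) ∧
  (∀ v : Fin 2 → ℕ, I.fn fPlus v = v 0 + v 1) ∧
  (∀ v : Fin 2 → ℕ, I.fn fTimes v = v 0 * v 1)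

/-- Provability in classical Peano arithmetic (by Gödel's completeness theorem:
semantic consequence of the PA axioms). -/
def PAProvable (F : Fml) : Prop :=
  ∀ (St : Struc) (e : ℕ → St.D),
    (∀ A, IsPAAx Fml.inLangA A → ∀ e' : ℕ → St.D, A.trueIn St e') → F.trueIn St e

/-! ## Primitive-recursive constructions -/

/-- Absolute primitive-recursive definitions (forms (I), (II), (III)). -/
inductive PRDefAbs : FuncSym → Fml → Prop
  | defI (f : FuncSym) (h : f.ar = 1) :
      PRDefAbs f (.all 0 (fEq (.func f fun _ => tv 0) (tS (tv 0))))
  | defII (f : FuncSym) :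
      PRDefAbs f (allClose (List.range f.ar) (fEq (.func f fun j => tv j.val) t0))
  | defIII (f : FuncSym) (i : Fin f.ar) :
      PRDefAbs f (allClose (List.range f.ar) (fEq (.func f fun j => tv j.val) (tv i.val)))

/-- Relative primitive-recursive definitions (forms (IV) composition and
(V) primitive recursion), together with the list of function symbols in terms of
which the new symbol is defined. -/
inductive PRDefRel : FuncSym → List FuncSym → Fml → Prop
  | defIV (f g : FuncSym) (hs : Fin g.ar → FuncSym)
      (hh : ∀ j, (hs j).ar = f.ar) :
      PRDefRel f (g :: List.ofFn hs)
        (allClose (List.range f.ar)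
          (fEq (.func f fun i => tv i.val)
               (.func g fun j => .func (hs j) fun i => tv i.val)))
  | defV (f g h : FuncSym) (n : ℕ) (hn : f.ar = n) (h1 : 1 ≤ n)
      (hg : g.ar = n - 1) (hh : h.ar = n + 1) :
      PRDefRel f [g, h]
        (.and (allClose (List.range' 1 (n - 1))
                 (fEq (.func f fun i => if i.val = 0 then t0 else tv i.val)
                      (.func g fun j => tv (j.val + 1))))
              (allClose (List.range n)
                 (fEq (.func f fun i => if i.val = 0 then tS (tv 0) else tv i.val)
                      (.func h fun j =>
                        if j.val = 0 then tv 0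
                        else if j.val = 1 then .func f fun i => tv i.val
                        else tv (j.val - 1)))))

/-- `Es` is a primitive-recursive construction of `f`. -/
def IsPRConstruction (f : FuncSym) (Es : List Fml) : Prop :=
  ∃ gs : List FuncSym, gs.length = Es.length ∧ gs.Nodup ∧ gs.getLast? = some f ∧
    ∀ (i : ℕ) (hi : i < Es.length) (hg : i < gs.length),
      PRDefAbs (gs[i]'hg) (Es[i]'hi) ∨
      ∃ deps : List FuncSym, PRDefRel (gs[i]'hg) deps (Es[i]'hi) ∧
        ∀ d ∈ deps, ∃ (j : ℕ) (hj : j < gs.length), j < i ∧ gs[j]'hj = d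

/-- The goal formula `⊓x₁…⊓xₙ⊔y (f(x₁,…,xₙ) = y)`. -/
def prGoal (f : FuncSym) : Fml :=
  callClose (List.range f.ar)
    (.cex f.ar (fEq (.func f fun i => tv i.val) (tv f.ar)))

/-- Contraction: from `E⃗,G,G ∘̸– F` infer `E⃗,G ∘̸– F`. -/
def ContractionRule (prem : List Sequent) (concl : Sequent) : Prop :=
  ∃ (E : List Fml) (G F : Fml), prem = [⟨E ++ [G, G], F⟩] ∧ concl = ⟨E ++ [G], F⟩

/-! ### Auxiliary development for Contraction -/

/-- `n` trues. -/
def rT (n : ℕ) : List Bool := List.replicate n true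

lemma rT_length (n : ℕ) : (rT n).length = n := List.length_replicate

lemma rT_succ (n : ℕ) : rT (n + 1) = rT n ++ [true] := List.replicate_succ'

lemma rT_cons (n : ℕ) : true :: rT n = rT (n + 1) := (List.replicate_succ (a := true) (n := n)).symm

lemma rT_dropLast (n : ℕ) : (rT (n + 1)).dropLast = rT n := by
  rw [rT_succ]; exact List.dropLast_concat

lemma rT_ne_snoc_false (n : ℕ) (w : List Bool) : rT n ≠ w ++ [false] := by
  intro h
  have : false ∈ rT n := h ▸ (List.mem_append_right w (List.mem_singleton_self false))
  exact Bool.false_ne_true (List.eq_of_mem_replicate this)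

lemma prefInf_mono {w' w : List Bool} {x : ℕ → Bool} (h : w' <+: w) (hp : prefInf w x) :
    prefInf w' x := by
  intro i hi
  have hi' : i < w.length := lt_of_lt_of_le hi h.length_le
  have := hp i hi'
  rw [← this]
  simp only [List.get_eq_getElem]
  exact List.IsPrefix.getElem h hi

lemma prefInf_snoc {w : List Bool} {x : ℕ → Bool} (hp : prefInf w x) :
    prefInf (w ++ [x w.length]) x := by
  intro i hi
  simp only [List.get_eq_getElem]
  rcases Nat.lt_or_ge i w.length with h | h
  · rw [List.getElem_append_left h]; exact hp i h
  · have : i = w.length := le_antisymm (by simpa using Nat.lt_succ_iff.mp (by simpa using hi)) h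
    subst this
    simp

lemma prefix_snoc_cases {v w : List Bool} {b : Bool} (h : v <+: w ++ [b]) :
    v <+: w ∨ v = w ++ [b] := by
  rcases List.prefix_concat_iff.mp h with h | h
  · exact Or.inr h
  · exact Or.inl h

lemma prefix_rT {v : List Bool} {k : ℕ} (h : v <+: rT k) : v = rT v.length := by
  refine List.eq_replicate_of_mem fun b hb => ?_
  exact List.eq_of_mem_replicate (h.subset hb)

lemma mem_leaves_stdGTree (l : List ConstGame) :
    ∀ (A : ConstGame) (w : List Bool) (C : ConstGame),
    (w, C) ∈ (stdGTree A l).leaves ↔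
      ∃ i, (A :: l)[i]? = some C ∧
        ((i < l.length ∧ w = rT i ++ [false]) ∨ (i = l.length ∧ w = rT i)) := by
  induction l with
  | nil =>
    intro A w C
    simp only [stdGTree, GTree.leaves, List.mem_singleton, Prod.mk.injEq]
    constructor
    · rintro ⟨rfl, rfl⟩
      exact ⟨0, by simp [rT]⟩
    · rintro ⟨i, hget, h⟩
      match i, hget with
      | 0, hget =>
        simp only [List.getElem?_cons_zero, Option.some_inj] at hget
        rcases h with ⟨h1, _⟩ | ⟨_, h2⟩
        · simp at h1
        · exact ⟨by simpa [rT] using h2, hget.symm⟩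
      | i + 1, hget => simp at hget
  | cons B rest ih =>
    intro A w C
    constructor
    · intro hp
      rcases List.mem_append.mp hp with hp | hp
      · rcases List.mem_map.mp hp with ⟨q, hq, hpq⟩
        have hq' : q = ([], A) := by simpa [stdGTree, GTree.leaves] using hq
        subst hq'
        obtain ⟨rfl, rfl⟩ := Prod.mk.injEq .. ▸ hpq
        exact ⟨0, by simp [rT]⟩
      · rcases List.mem_map.mp hp with ⟨q, hq, hpq⟩
        obtain ⟨q1, q2⟩ := q
        obtain ⟨rfl, rfl⟩ := Prod.mk.injEq .. ▸ hpq
        rcases (ih B q1 q2).mp hq with ⟨i, hget, h⟩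
        refine ⟨i + 1, by simpa using hget, ?_⟩
        rcases h with ⟨h1, h2⟩ | ⟨h1, h2⟩
        · exact Or.inl ⟨by simpa using Nat.succ_lt_succ h1, by simp [h2, ← rT_cons]⟩
        · exact Or.inr ⟨by simp [h1], by simp [h2, ← rT_cons]⟩
    · rintro ⟨i, hget, h⟩
      match i with
      | 0 =>
        simp only [List.getElem?_cons_zero, Option.some_inj] at hget
        rcases h with ⟨_, h2⟩ | ⟨h1, _⟩
        · apply List.mem_append.mpr; left
          simp only [rT, List.replicate_zero, List.nil_append] at h2
          subst h2; subst hget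
          simp [stdGTree, GTree.leaves]
        · simp at h1
      | i + 1 =>
        apply List.mem_append.mpr; right
        simp only [List.getElem?_cons_succ] at hget
        rcases h with ⟨h1, h2⟩ | ⟨h1, h2⟩
        · have h1' : i < rest.length := by simpa using Nat.lt_of_succ_lt_succ h1
          refine List.mem_map.mpr ⟨(rT i ++ [false], C),
            (ih B _ _).mpr ⟨i, hget, Or.inl ⟨h1', rfl⟩⟩, ?_⟩
          simp [h2, ← rT_cons]
        · have h1' : i = rest.length := by
            simpa using Nat.succ_injective (by simpa using h1)
          refine List.mem_map.mpr ⟨(rT i, C),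
            (ih B _ _).mpr ⟨i, hget, Or.inr ⟨h1', rfl⟩⟩, ?_⟩
          simp [h2, ← rT_cons]

/-- The standard tree over a nonempty list of constant games (junk on `[]`). -/
def stdOf : List ConstGame → GTree
  | [] => .leaf (elemGame True)
  | A :: l => stdGTree A l

lemma mem_leaves_stdOf (L : List ConstGame) (hL : L ≠ []) (w : List Bool) (C : ConstGame) :
    (w, C) ∈ (stdOf L).leaves ↔
      ∃ i, L[i]? = some C ∧
        ((i + 1 < L.length ∧ w = rT i ++ [false]) ∨ (i + 1 = L.length ∧ w = rT i)) := by
  match L, hL with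
  | A :: l, _ =>
    rw [show stdOf (A :: l) = stdGTree A l from rfl, mem_leaves_stdGTree]
    simp only [List.length_cons]
    constructor
    · rintro ⟨i, h1, (⟨h2, h3⟩ | ⟨h2, h3⟩)⟩
      · exact ⟨i, h1, Or.inl ⟨by omega, h3⟩⟩
      · exact ⟨i, h1, Or.inr ⟨by omega, h3⟩⟩
    · rintro ⟨i, h1, (⟨h2, h3⟩ | ⟨h2, h3⟩)⟩
      · exact ⟨i, h1, Or.inl ⟨by omega, h3⟩⟩
      · exact ⟨i, h1, Or.inr ⟨by omega, h3⟩⟩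

lemma seq_game (I : Interp) (e : Valuation) (l : List Fml) (hl : l ≠ []) (F : Fml) :
    (Sequent.mk l F).game I e =
      dfb (stdOf (l.map fun G => G.game I e)) (F.game I e) := by
  match l, hl with
  | E :: rest, _ => rfl

section ContrTrees

lemma getq_left {α : Type*} (l₁ l₂ : List α) (n : ℕ) (h : n < l₁.length) :
    (l₁ ++ l₂)[n]? = l₁[n]? := by
  rw [List.getElem?_append, if_pos h]

lemma getq_right {α : Type*} (l₁ l₂ : List α) (n : ℕ) (h : l₁.length ≤ n) :
    (l₁ ++ l₂)[n]? = l₂[n - l₁.length]? := by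
  rw [List.getElem?_append, if_neg (by omega)]

variable (As : List ConstGame) (Gg : ConstGame)

/-- The extra replicative move made by the contraction machine. -/
def lmR (k : ℕ) : Labmove := ⟨.top, .repl (rT k)⟩

lemma L0_ne : As ++ [Gg] ≠ [] := by simp

lemma L1_ne : As ++ [Gg, Gg] ≠ [] := by simp

lemma C1 : (rT As.length, Gg) ∈ (stdOf (As ++ [Gg])).leaves := by
  rw [mem_leaves_stdOf _ (L0_ne As Gg)]
  refine ⟨As.length, ?_, Or.inr ⟨by simp, rfl⟩⟩
  rw [getq_right _ _ _ (le_refl _)]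
  simp

lemma C2 {w C} (h : (w, C) ∈ (stdOf (As ++ [Gg])).leaves) :
    (w = rT As.length ∧ C = Gg) ∨ (w, C) ∈ (stdOf (As ++ [Gg, Gg])).leaves := by
  rw [mem_leaves_stdOf _ (L0_ne As Gg)] at h
  obtain ⟨i, hget, h⟩ := h
  rcases h with ⟨h1, h2⟩ | ⟨h1, h2⟩
  · right
    rw [mem_leaves_stdOf _ (L1_ne As Gg)]
    have h1' : i < As.length := by simp at h1; omega
    refine ⟨i, ?_, Or.inl ⟨by simp; omega, h2⟩⟩
    rw [getq_left _ _ _ h1', ← getq_left As [Gg] i h1', hget]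
  · left
    have h1' : i = As.length := by simp at h1; omega
    subst h1'
    rw [getq_right _ _ _ (le_refl _)] at hget
    simp at hget
    exact ⟨h2, hget.symm⟩

lemma C3 (b : Bool) : (rT As.length ++ [b], Gg) ∈ (stdOf (As ++ [Gg, Gg])).leaves := by
  rw [mem_leaves_stdOf _ (L1_ne As Gg)]
  cases b
  · refine ⟨As.length, ?_, Or.inl ⟨by simp, rfl⟩⟩
    rw [getq_right _ _ _ (le_refl _)]
    simp
  · refine ⟨As.length + 1, ?_, Or.inr ⟨by simp, by rw [← rT_succ]⟩⟩
    rw [getq_right _ _ _ (by omega)]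
    simp

lemma C4 {w C} (h : (w, C) ∈ (stdOf (As ++ [Gg, Gg])).leaves) :
    (w, C) ∈ (stdOf (As ++ [Gg])).leaves ∨
      (C = Gg ∧ (w = rT As.length ++ [false] ∨ w = rT As.length ++ [true])) := by
  rw [mem_leaves_stdOf _ (L1_ne As Gg)] at h
  obtain ⟨i, hget, h⟩ := h
  rcases h with ⟨h1, h2⟩ | ⟨h1, h2⟩
  · have h1' : i ≤ As.length := by simp at h1; omega
    rcases lt_or_eq_of_le h1' with h1' | h1'
    · left
      rw [mem_leaves_stdOf _ (L0_ne As Gg)]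
      refine ⟨i, ?_, Or.inl ⟨by simp; omega, h2⟩⟩
      rw [getq_left _ _ _ h1', ← getq_left As [Gg, Gg] i h1', hget]
    · subst h1'
      right
      rw [getq_right _ _ _ (le_refl _)] at hget
      simp at hget
      exact ⟨hget.symm, Or.inl h2⟩
  · have h1' : i = As.length + 1 := by simp at h1; omega
    subst h1'
    right
    rw [getq_right _ _ _ (by omega)] at hget
    simp at hget
    exact ⟨hget.symm, Or.inr (by rw [h2, rT_succ])⟩

lemma C5 {w C} (h : (w, C) ∈ (stdOf (As ++ [Gg, Gg])).leaves) {j : ℕ}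
    (hj : j ≤ As.length) : w ≠ rT j := by
  rw [mem_leaves_stdOf _ (L1_ne As Gg)] at h
  obtain ⟨i, _, h⟩ := h
  rcases h with ⟨_, h2⟩ | ⟨h1, h2⟩
  · subst h2
    intro hc
    exact rT_ne_snoc_false j (rT i) hc.symm
  · have h1' : i = As.length + 1 := by simp at h1; omega
    subst h1'; subst h2
    intro hc
    have := congrArg List.length hc
    simp only [rT_length] at this
    omega

end ContrTrees

section ContrLegal

variable (As : List ConstGame) (Gg B : ConstGame)

lemma no_small_repl (Φ : List Labmove)
    (hsh : ∀ i lm, Φ[i]? = some lm → dfbShape (stdOf (As ++ [Gg, Gg])) Φ i lm) :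
    ∀ (i j : ℕ), j ≤ As.length → Φ[i]? ≠ some ⟨.top, .repl (rT j)⟩ := by
  have H : ∀ i : ℕ, (∀ i' : ℕ, i' < i → ∀ j : ℕ, j ≤ As.length → Φ[i']? ≠ some ⟨.top, .repl (rT j)⟩) →
      ∀ j : ℕ, j ≤ As.length → Φ[i]? ≠ some ⟨.top, .repl (rT j)⟩ := by
    intro i IH j hj hΦ
    have h := hsh i _ hΦ
    simp only [dfbShape] at h
    rcases h with ⟨⟨w', C⟩, hmem, hw⟩ | ⟨hne, j', hj', hchain⟩
    · exact C5 As Gg hmem hj hw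
    · have hj0 : j ≠ 0 := by
        rintro rfl
        simp [rT] at hne
      obtain ⟨m, rfl⟩ := Nat.exists_eq_succ_of_ne_zero hj0
      rw [rT_dropLast] at hchain
      exact IH j' hj' m (by omega) hchain
  exact fun i => Nat.strongRecOn i H

lemma notmem_of_shape (Φ : List Labmove)
    (hsh : ∀ i lm, Φ[i]? = some lm → dfbShape (stdOf (As ++ [Gg, Gg])) Φ i lm) :
    lmR As.length ∉ Φ := by
  intro hmem
  obtain ⟨i, hi, hEq⟩ := List.getElem_of_mem hmem
  exact no_small_repl As Gg Φ hsh i As.length (le_refl _)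
    (by rw [List.getElem?_eq_getElem hi, hEq]; rfl)

lemma mem_of_getq {α : Type*} {l : List α} {n : ℕ} {a : α} (h : l[n]? = some a) : a ∈ l := by
  obtain ⟨hlt, rfl⟩ := List.getElem?_eq_some_iff.mp h
  exact List.getElem_mem hlt

lemma shape_fwd (Φ : List Labmove) (i : ℕ) (lm : Labmove)
    (h : dfbShape (stdOf (As ++ [Gg, Gg])) Φ i lm) :
    dfbShape (stdOf (As ++ [Gg])) (lmR As.length :: Φ) (i + 1) lm := by
  obtain ⟨pl, mv⟩ := lm
  cases mv with
  | succd β => simp only [dfbShape]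
  | choice n => simp only [dfbShape] at h
  | par b β => simp only [dfbShape] at h
  | repl w =>
    cases pl with
    | bot => simp only [dfbShape] at h
    | top =>
      simp only [dfbShape] at h ⊢
      rcases h with ⟨⟨w', C⟩, hmem, hw⟩ | ⟨hne, j, hj, hchain⟩
      · dsimp at hw; subst hw
        rcases C4 As Gg hmem with hmem0 | ⟨hC, hw⟩
        · exact Or.inl ⟨(w', C), hmem0, rfl⟩
        · refine Or.inr ?_
          rcases hw with rfl | rfl <;>
            exact ⟨by simp, 0, Nat.succ_pos _,
              by simp only [List.getElem?_cons_zero, List.dropLast_concat]; rfl⟩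
      · exact Or.inr ⟨hne, j + 1, Nat.succ_lt_succ hj, by simpa using hchain⟩
  | ante w β =>
    simp only [dfbShape] at h ⊢
    rcases h with ⟨⟨w', C⟩, hmem, hw⟩ | ⟨hne, j, hj, hchain⟩
    · dsimp at hw
      rcases C4 As Gg hmem with hmem0 | ⟨hC, hw'⟩
      · exact Or.inl ⟨(w', C), hmem0, hw⟩
      · rcases hw' with rfl | rfl <;>
        · rcases prefix_snoc_cases hw with hw2 | rfl
          · exact Or.inl ⟨(rT As.length, Gg), C1 As Gg, hw2⟩
          · refine Or.inr ⟨by simp, 0, Nat.succ_pos _,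
              by simp only [List.getElem?_cons_zero, List.dropLast_concat]; rfl⟩
    · exact Or.inr ⟨hne, j + 1, Nat.succ_lt_succ hj, by simpa using hchain⟩

lemma shape_bwd (Φ : List Labmove) (i : ℕ) (lm : Labmove)
    (hnot : lmR As.length ∉ Φ) (hlm : Φ[i]? = some lm)
    (h : dfbShape (stdOf (As ++ [Gg])) (lmR As.length :: Φ) (i + 1) lm) :
    dfbShape (stdOf (As ++ [Gg, Gg])) Φ i lm := by
  obtain ⟨pl, mv⟩ := lm
  cases mv with
  | succd β => simp only [dfbShape]
  | choice n => simp only [dfbShape] at h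
  | par b β => simp only [dfbShape] at h
  | repl w =>
    cases pl with
    | bot => simp only [dfbShape] at h
    | top =>
      simp only [dfbShape] at h ⊢
      rcases h with ⟨⟨w', C⟩, hmem, hw⟩ | ⟨hne, j, hj, hchain⟩
      · dsimp at hw; subst hw
        rcases C2 As Gg hmem with ⟨rfl, -⟩ | hmem1
        · exact absurd (mem_of_getq hlm) hnot
        · exact Or.inl ⟨(w', C), hmem1, rfl⟩
      · match j, hj, hchain with
        | 0, _, hchain =>
          simp only [List.getElem?_cons_zero, lmR, Option.some_inj] at hchain
          have hdl : w.dropLast = rT As.length := by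
            have := congrArg Labmove.move hchain
            simpa using this.symm
          have hw : w = rT As.length ++ [w.getLast hne] := by
            conv_lhs => rw [← List.dropLast_append_getLast hne]
            rw [hdl]
          refine Or.inl ⟨(rT As.length ++ [w.getLast hne], Gg), C3 As Gg _, hw.symm⟩
        | j + 1, hj, hchain =>
          exact Or.inr ⟨hne, j, Nat.lt_of_succ_lt_succ hj, by simpa using hchain⟩
  | ante w β =>
    simp only [dfbShape] at h ⊢
    rcases h with ⟨⟨w', C⟩, hmem, hw⟩ | ⟨hne, j, hj, hchain⟩
    · dsimp at hw
      rcases C2 As Gg hmem with ⟨rfl, -⟩ | hmem1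
      · exact Or.inl ⟨(rT As.length ++ [false], Gg), C3 As Gg false,
          hw.trans (List.prefix_append _ _)⟩
      · exact Or.inl ⟨(w', C), hmem1, hw⟩
    · match j, hj, hchain with
      | 0, _, hchain =>
        simp only [List.getElem?_cons_zero, lmR, Option.some_inj] at hchain
        have hdl : w.dropLast = rT As.length := by
          have := congrArg Labmove.move hchain
          simpa using this.symm
        have hw : w = rT As.length ++ [w.getLast hne] := by
          conv_lhs => rw [← List.dropLast_append_getLast hne]
          rw [hdl]
        exact Or.inl ⟨(rT As.length ++ [w.getLast hne], Gg), C3 As Gg _, hw ▸ List.prefix_refl _⟩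
      | j + 1, hj, hchain =>
        exact Or.inr ⟨hne, j, Nat.lt_of_succ_lt_succ hj, by simpa using hchain⟩

lemma projS_lmR : projS (lmR k) = none := rfl

lemma projA_lmR (x : ℕ → Bool) : projA x (lmR k) = none := rfl

lemma legalPos_iff (Φ : List Labmove) :
    dfbLegalPos (stdOf (As ++ [Gg, Gg])) B Φ ↔
    dfbLegalPos (stdOf (As ++ [Gg])) B (lmR As.length :: Φ) := by
  constructor
  · rintro ⟨sh, cnt, sb, lv⟩
    have hnot : lmR As.length ∉ Φ := notmem_of_shape As Gg Φ sh
    refine ⟨?_, ?_, ?_, ?_⟩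
    · intro i lm hi
      match i, hi with
      | 0, hi =>
        simp only [List.getElem?_cons_zero, Option.some_inj] at hi
        subst hi
        simp only [lmR, dfbShape]
        exact Or.inl ⟨(rT As.length, Gg), C1 As Gg, rfl⟩
      | i + 1, hi =>
        simp only [List.getElem?_cons_succ] at hi
        exact shape_fwd As Gg Φ i lm (sh i lm hi)
    · intro w
      by_cases hw : w = rT As.length
      · subst hw
        have h0 : Φ.count (⟨Player.top, Move.repl (rT As.length)⟩ : Labmove) = 0 :=
          List.count_eq_zero.mpr hnot
        have : lmR As.length = (⟨Player.top, Move.repl (rT As.length)⟩ : Labmove) := rfl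
        rw [this, List.count_cons, h0]
        simp
      · have hne : (⟨Player.top, Move.repl w⟩ : Labmove) ≠ lmR As.length := by
          intro hc
          exact hw (by simpa [lmR] using congrArg Labmove.move hc)
        calc (lmR As.length :: Φ).count ⟨Player.top, Move.repl w⟩
            = Φ.count ⟨Player.top, Move.repl w⟩ := by
              simp [List.count_cons, hne, Ne.symm hne]
          _ ≤ 1 := cnt w
    · rw [List.filterMap_cons, projS_lmR]
      exact sb
    · rintro ⟨w, C⟩ hp x hx
      rw [List.filterMap_cons, projA_lmR]
      rcases C2 As Gg hp with ⟨hw, hC⟩ | hp1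
      · dsimp at hx ⊢
        subst hw; rw [hC]
        have hx' := prefInf_snoc hx
        have := lv (rT As.length ++ [x (rT As.length).length], Gg)
          (C3 As Gg (x (rT As.length).length)) x hx'
        exact this
      · exact lv (w, C) hp1 x hx
  · rintro ⟨sh', cnt', sb', lv'⟩
    have hnot : lmR As.length ∉ Φ := by
      have h := cnt' (rT As.length)
      rw [show (⟨Player.top, Move.repl (rT As.length)⟩ : Labmove) = lmR As.length from rfl,
        List.count_cons] at h
      simp at h
      exact List.count_eq_zero.mp (by omega)
    refine ⟨?_, ?_, ?_, ?_⟩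
    · intro i lm hi
      exact shape_bwd As Gg Φ i lm hnot hi (sh' (i + 1) lm (by simpa using hi))
    · intro w
      exact le_trans ((List.sublist_cons_self _ _).count_le _) (cnt' w)
    · have := sb'
      rwa [List.filterMap_cons, projS_lmR] at this
    · rintro ⟨w, C⟩ hp x hx
      rcases C4 As Gg hp with hp0 | ⟨hC, hw⟩
      · have := lv' (w, C) hp0 x hx
        rwa [List.filterMap_cons, projA_lmR] at this
      · dsimp at hx ⊢
        rw [hC]
        have hx' : prefInf (rT As.length) x := by
          rcases hw with rfl | rfl <;> exact prefInf_mono (List.prefix_append _ _) hx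
        have := lv' (rT As.length, Gg) (C1 As Gg) x hx'
        rwa [List.filterMap_cons, projA_lmR] at this

lemma legalPos_nil (h : dfbLegalPos (stdOf (As ++ [Gg, Gg])) B []) :
    dfbLegalPos (stdOf (As ++ [Gg])) B [] := by
  obtain ⟨sh, cnt, sb, lv⟩ := h
  refine ⟨by intro i lm h; simp at h, by intro w; simp, sb, ?_⟩
  rintro ⟨w, C⟩ hp x hx
  rcases C2 As Gg hp with ⟨hw, hC⟩ | hp1
  · subst hw
    rw [hC]
    exact lv (rT As.length ++ [x (rT As.length).length], Gg) (C3 As Gg _) x (prefInf_snoc hx)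
  · exact lv (w, C) hp1 x hx

end ContrLegal

/-! ### Prepending a move to a run -/

def consRun (lm : Labmove) : RunT → RunT
  | .fin l => .fin (lm :: l)
  | .inf f => .inf fun n => match n with | 0 => lm | m + 1 => f m

lemma take_zero (Γ : RunT) : Γ.take 0 = [] := by cases Γ <;> rfl

lemma consRun_take_zero (lm : Labmove) (Γ : RunT) : (consRun lm Γ).take 0 = [] := by
  cases Γ <;> rfl

lemma consRun_take_succ (lm : Labmove) (Γ : RunT) (n : ℕ) :
    (consRun lm Γ).take (n + 1) = lm :: Γ.take n := by
  cases Γ with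
  | fin l => rfl
  | inf f =>
    show (List.range (n + 1)).map _ = _
    rw [List.range_succ_eq_map, List.map_cons, List.map_map]
    rfl

lemma hasPrefix_cons {Γ : RunT} {Φ : List Labmove} (lm : Labmove) (h : Γ.hasPrefix Φ) :
    (consRun lm Γ).hasPrefix (lm :: Φ) := by
  unfold RunT.hasPrefix at *
  rw [List.length_cons, consRun_take_succ, h]

lemma count_congr' {p q : ℕ → Prop} [DecidablePred p] [DecidablePred q]
    (h : ∀ n, p n ↔ q n) (n : ℕ) : Nat.count p n = Nat.count q n := by
  unfold Nat.count
  refine List.countP_congr fun a _ => ?_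
  rw [decide_eq_true_eq, decide_eq_true_eq]
  exact h a

lemma nth_shift {P P' : ℕ → Prop} (hP : {n | P n}.Infinite)
    (h0 : ¬ P' 0) (hs : ∀ m, P' (m + 1) ↔ P m) (k : ℕ) :
    Nat.nth P' k = Nat.nth P k + 1 := by
  classical
  have hpn : P (Nat.nth P k) := Nat.nth_mem_of_infinite hP k
  have hcount : Nat.count P (Nat.nth P k) = k := Nat.count_nth_of_infinite hP k
  have hP'n : P' (Nat.nth P k + 1) := (hs _).mpr hpn
  have hc : Nat.count P' (Nat.nth P k + 1) = k := by
    rw [Nat.count_succ', if_neg h0, Nat.add_zero, count_congr' hs, hcount]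
  have h2 := Nat.nth_count hP'n
  rw [hc] at h2
  exact h2

lemma filterMap_range_stable {α : Type*} {g : ℕ → Option α} {N : ℕ}
    (hN : ∀ n, N ≤ n → g n = none) :
    ∀ M, N ≤ M → (List.range M).filterMap g = (List.range N).filterMap g := by
  intro M hM
  induction M with
  | zero =>
    have : N = 0 := Nat.le_zero.mp hM
    rw [this]
  | succ M ih =>
    rcases Nat.eq_or_lt_of_le hM with h | h
    · rw [h]
    · have hM' : N ≤ M := by omega
      rw [List.range_succ, List.filterMap_append, ih hM']
      have : List.filterMap g [M] = [] := by
        simp only [List.filterMap_cons, hN M hM', List.filterMap_nil]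
      rw [this, List.append_nil]

lemma filterMap_range_shift {α : Type*} (g : ℕ → Option α) (a : Option α) (m : ℕ) :
    (List.range (m + 1)).filterMap (fun n => match n with | 0 => a | n + 1 => g n)
      = a.toList ++ (List.range m).filterMap g := by
  rw [List.range_succ_eq_map, List.filterMap_cons, List.filterMap_map]
  cases a <;> simp <;> rfl

lemma fmap_consRun_none (g : Labmove → Option Labmove) (lm : Labmove) (hg : g lm = none)
    (Γ : RunT) : (consRun lm Γ).fmap g = Γ.fmap g := by
  cases Γ with
  | fin l =>
    show RunT.fin ((lm :: l).filterMap g) = RunT.fin (l.filterMap g)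
    simp only [List.filterMap_cons, hg]
  | inf f =>
    show RunT.fmap g (.inf fun n => match n with | 0 => lm | m + 1 => f m) = _
    set f' : ℕ → Labmove := fun n => match n with | 0 => lm | m + 1 => f m with hf'
    have h0 : ¬ ((g (f' 0)).isSome = true) := by
      simp [hf', hg]
    have hs : ∀ m, ((g (f' (m + 1))).isSome = true) ↔ ((g (f m)).isSome = true) := fun m =>
      Iff.rfl
    have hsets : {n | (g (f' n)).isSome = true} = (· + 1) '' {n | (g (f n)).isSome = true} := by
      ext n
      match n with
      | 0 =>
        simp only [Set.mem_setOf_eq, Set.mem_image]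
        constructor
        · intro h; exact absurd h h0
        · rintro ⟨x, -, hx⟩; omega
      | m + 1 =>
        simp only [Set.mem_setOf_eq, Set.mem_image]
        constructor
        · intro h; exact ⟨m, h, rfl⟩
        · rintro ⟨x, hx, hxe⟩
          have : x = m := by omega
          subst this; exact hx
    have hinf : {n | (g (f' n)).isSome = true}.Infinite ↔
        {n | (g (f n)).isSome = true}.Infinite := by
      rw [hsets]
      exact Set.infinite_image_iff (fun a _ b _ h => by simpa using h)
    simp only [RunT.fmap]
    by_cases hI : {n | (g (f n)).isSome = true}.Infinite
    · rw [dif_pos (hinf.mpr hI), dif_pos hI]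
      congr 1
      funext kk
      rw [nth_shift hI h0 hs kk]
    · rw [dif_neg (fun hc => hI (hinf.mp hc)), dif_neg hI]
      congr 1
      set N' := (not_infinite_bound (fun hc => hI (hinf.mp hc) :
        ¬ {n | (g (f' n)).isSome = true}.Infinite)).choose with hN'
      set N := (not_infinite_bound hI).choose with hN
      have hN'spec := (not_infinite_bound (fun hc => hI (hinf.mp hc) :
        ¬ {n | (g (f' n)).isSome = true}.Infinite)).choose_spec
      have hNspec := (not_infinite_bound hI).choose_spec
      have hnone' : ∀ n, N' ≤ n → g (f' n) = none := fun n hn => by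
        by_contra hc
        have : (g (f' n)).isSome = true := Option.ne_none_iff_isSome.mp hc
        exact absurd (hN'spec n this) (by omega)
      have hnone : ∀ n, N ≤ n → g (f n) = none := fun n hn => by
        by_contra hc
        have : (g (f n)).isSome = true := Option.ne_none_iff_isSome.mp hc
        exact absurd (hNspec n this) (by omega)
      calc (List.range N').filterMap (fun n => g (f' n))
          = (List.range (N + 1 + N')).filterMap (fun n => g (f' n)) :=
            (filterMap_range_stable hnone' _ (by omega)).symm
        _ = (g lm).toList ++ (List.range (N + N')).filterMap (fun n => g (f n)) := by
            rw [show N + 1 + N' = (N + N') + 1 by omega]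
            have he : (fun n => g (f' n)) =
                (fun n : ℕ => match n with | 0 => g lm | n + 1 => g (f n)) :=
              funext fun n => by cases n <;> rfl
            rw [he]
            exact filterMap_range_shift (fun n => g (f n)) (g lm) (N + N')
        _ = (List.range N).filterMap (fun n => g (f n)) := by
            rw [hg, Option.toList_none, List.nil_append]
            exact filterMap_range_stable hnone _ (by omega)

lemma finMany_consRun (P : Labmove → Prop) (lm : Labmove) (Γ : RunT) (h : Γ.finMany P) :
    (consRun lm Γ).finMany P := by
  cases Γ with
  | fin l => trivial
  | inf f =>
    refine Set.Finite.subset (Set.Finite.insert 0 (Set.Finite.image (· + 1) h)) ?_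
    intro n hn
    match n with
    | 0 => exact Set.mem_insert _ _
    | m + 1 => exact Set.mem_insert_of_mem _ ⟨m, hn, rfl⟩

section ContrTransfer

variable (As : List ConstGame) (Gg B : ConstGame)

lemma legal_consRun {Γ : RunT} (h : (dfb (stdOf (As ++ [Gg, Gg])) B).legal Γ) :
    (dfb (stdOf (As ++ [Gg])) B).legal (consRun (lmR As.length) Γ) := by
  intro n
  match n with
  | 0 =>
    rw [consRun_take_zero]
    refine legalPos_nil As Gg B ?_
    have h0 := h 0
    rwa [take_zero] at h0
  | n + 1 =>
    rw [consRun_take_succ]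
    exact (legalPos_iff As Gg B _).mp (h n)

lemma illegal_consRun {Γ : RunT}
    (h : (dfb (stdOf (As ++ [Gg, Gg])) B).illegalFor .bot Γ) :
    (dfb (stdOf (As ++ [Gg])) B).illegalFor .bot (consRun (lmR As.length) Γ) := by
  obtain ⟨Φ, lm', hpre, hleg, hnleg, hpl⟩ := h
  refine ⟨lmR As.length :: Φ, lm', ?_, (legalPos_iff As Gg B _).mp hleg, ?_, hpl⟩
  · have h2 := hasPrefix_cons (lmR As.length) hpre
    rwa [← List.cons_append] at h2
  · intro hc
    rw [List.cons_append] at hc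
    exact hnleg ((legalPos_iff As Gg B _).mpr hc)

lemma wn_consRun {Γ : RunT} (hwn : (dfb (stdOf (As ++ [Gg, Gg])) B).wn Γ = .top) :
    (dfb (stdOf (As ++ [Gg])) B).wn (consRun (lmR As.length) Γ) = .top := by
  simp only [dfb] at hwn ⊢
  split_ifs at hwn with hC
  obtain ⟨hfin, hdisj⟩ := hC
  rw [if_pos]
  constructor
  · exact finMany_consRun _ _ _ hfin
  · rw [fmap_consRun_none projS (lmR As.length) projS_lmR]
    rcases hdisj with hB | ⟨⟨w, C⟩, hp, x, hx, hwn2⟩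
    · exact Or.inl hB
    · refine Or.inr ?_
      rw [← fmap_consRun_none (projA x) (lmR As.length) (projA_lmR x) Γ] at hwn2
      rcases C4 As Gg hp with hp0 | ⟨hC2, hw⟩
      · exact ⟨(w, C), hp0, x, hx, hwn2⟩
      · refine ⟨(rT As.length, Gg), C1 As Gg, x, ?_, ?_⟩
        · dsimp at hx ⊢
          rcases hw with rfl | rfl <;> exact prefInf_mono (List.prefix_append _ _) hx
        · dsimp at hwn2 ⊢
          rw [hC2] at hwn2
          exact hwn2

lemma wonBy_consRun {Γ : RunT} (h : (dfb (stdOf (As ++ [Gg, Gg])) B).wonBy .top Γ) :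
    (dfb (stdOf (As ++ [Gg])) B).wonBy .top (consRun (lmR As.length) Γ) := by
  rcases h with h | ⟨hleg, hwn⟩
  · exact Or.inl (illegal_consRun As Gg B h)
  · exact Or.inr ⟨legal_consRun As Gg B hleg, wn_consRun As Gg B hwn⟩

end ContrTransfer

/-! ### The contraction machine -/

/-- The machine for the conclusion: first replicate the `G`-leaf, then play like `M`,
ignoring the first move on the run tape. -/
def contrM (M : BMEPM) (w : List Bool) : BMEPM where
  act e Φ t :=
    match t with
    | 0 => .moves [.repl w]
    | t + 1 => M.act e (Φ.drop 1) t

lemma contrM_pos (M : BMEPM) (w : List Bool) (e : Valuation) (env : ℕ → List Move) :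
    ∀ t, (contrM M w).pos e env (t + 1) =
      (⟨.top, .repl w⟩ : Labmove) :: M.pos e (fun s => env (s + 1)) t := by
  intro t
  induction t with
  | zero => rfl
  | succ t ih =>
    have hact : (contrM M w).act e ((contrM M w).pos e env (t + 1)) (t + 1)
        = M.act e (M.pos e (fun s => env (s + 1)) t) t := by
      rw [ih]; rfl
    show (match (contrM M w).act e ((contrM M w).pos e env (t + 1)) (t + 1) with
      | .moves ms => (contrM M w).pos e env (t + 1) ++ ms.map fun m => (⟨.top, m⟩ : Labmove)
      | .permit => (contrM M w).pos e env (t + 1) ++ (env (t + 1)).map fun m => (⟨.bot, m⟩ : Labmove)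
      | .think => (contrM M w).pos e env (t + 1)) =
      (⟨.top, .repl w⟩ : Labmove) ::
      (match M.act e (M.pos e (fun s => env (s + 1)) t) t with
      | .moves ms => M.pos e (fun s => env (s + 1)) t ++ ms.map fun m => (⟨.top, m⟩ : Labmove)
      | .permit => M.pos e (fun s => env (s + 1)) t ++
          (env (t + 1)).map fun m => (⟨.bot, m⟩ : Labmove)
      | .think => M.pos e (fun s => env (s + 1)) t)
    rw [hact, ih]
    cases M.act e (M.pos e (fun s => env (s + 1)) t) t <;> simp

lemma contrM_fair (M : BMEPM) (w : List Bool) (e : Valuation) (env : ℕ → List Move)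
    (h : M.Fair e (fun s => env (s + 1))) : (contrM M w).Fair e env := by
  intro N
  obtain ⟨t, ht, hact⟩ := h N
  refine ⟨t + 1, by omega, ?_⟩
  show (contrM M w).act e ((contrM M w).pos e env (t + 1)) (t + 1) = .permit
  rw [contrM_pos]
  exact hact

lemma pos_mono_step (M : BMEPM) (e : Valuation) (env : ℕ → List Move) (t : ℕ) :
    M.pos e env t <+: M.pos e env (t + 1) := by
  show M.pos e env t <+: (match M.act e (M.pos e env t) t with
    | .moves ms => M.pos e env t ++ ms.map fun m => (⟨.top, m⟩ : Labmove)
    | .permit => M.pos e env t ++ (env t).map fun m => (⟨.bot, m⟩ : Labmove)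
    | .think => M.pos e env t)
  cases M.act e (M.pos e env t) t with
  | moves ms => exact List.prefix_append _ _
  | permit => exact List.prefix_append _ _
  | think => exact List.prefix_refl _

lemma pos_mono (M : BMEPM) (e : Valuation) (env : ℕ → List Move) :
    ∀ s t, s ≤ t → M.pos e env s <+: M.pos e env t := by
  intro s t h
  induction t with
  | zero =>
    have : s = 0 := Nat.le_zero.mp h
    rw [this]
  | succ t ih =>
    rcases Nat.eq_or_lt_of_le h with h' | h'
    · rw [h']
    · exact (ih (by omega)).trans (pos_mono_step M e env t)

lemma prefix_getElem?_eq {α : Type*} {l₁ l₂ : List α} {n : ℕ} (h : l₁ <+: l₂)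
    (hn : n < l₁.length) : l₂[n]? = l₁[n]? := by
  obtain ⟨t, rfl⟩ := h
  exact getq_left _ _ _ hn

lemma spelled_cons (lm : Labmove) (p q : ℕ → List Labmove)
    (hmono : ∀ s t, s ≤ t → p s <+: p t)
    (h0 : q 0 = []) (hS : ∀ t, q (t + 1) = lm :: p t) :
    spelled q = consRun lm (spelled p) := by
  have hQP : (∃ t, ∀ s, (q s).length ≤ (q t).length) ↔
      (∃ t, ∀ s, (p s).length ≤ (p t).length) := by
    constructor
    · rintro ⟨t, ht⟩
      match t with
      | 0 =>
        have := ht 1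
        rw [h0, hS] at this
        simp at this
      | t + 1 =>
        refine ⟨t, fun s => ?_⟩
        have := ht (s + 1)
        rw [hS, hS] at this
        simpa using this
    · rintro ⟨t, ht⟩
      refine ⟨t + 1, fun s => ?_⟩
      match s with
      | 0 => rw [h0]; simp
      | s + 1 =>
        rw [hS, hS]
        simpa using ht s
  unfold spelled
  by_cases hb : ∃ t, ∀ s, (p s).length ≤ (p t).length
  · rw [dif_pos (hQP.mpr hb), dif_pos hb]
    show RunT.fin _ = RunT.fin _
    congr 1
    have hu := Nat.find_spec (hQP.mpr hb)
    have hune : Nat.find (hQP.mpr hb) ≠ 0 := by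
      intro hc
      rw [hc, h0] at hu
      have := hu 1
      rw [hS] at this
      simp at this
    obtain ⟨u, hu'⟩ := Nat.exists_eq_succ_of_ne_zero hune
    rw [hu', hS]
    congr 1
    -- p u = p (Nat.find hb)
    have hmax1 : ∀ s, (p s).length ≤ (p u).length := fun s => by
      have := hu' ▸ hu (s + 1)
      rw [hS, hS] at this
      simpa using this
    have hmax2 := Nat.find_spec hb
    have hlen : (p u).length = (p (Nat.find hb)).length :=
      le_antisymm (hmax2 u) (hmax1 _)
    rcases le_total u (Nat.find hb) with h | h
    · exact ((hmono _ _ h).eq_of_length hlen).symm.symm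
    · exact ((hmono _ _ h).eq_of_length hlen.symm).symm
  · rw [dif_neg (fun hc => hb (hQP.mp hc)), dif_neg hb]
    show RunT.inf _ = RunT.inf _
    congr 1
    funext n
    match n with
    | 0 =>
      show (spelledGet q 0).getD default = lm
      have he : ∃ t, 0 < (q t).length := ⟨1, by rw [hS]; simp⟩
      unfold spelledGet
      rw [dif_pos he]
      have hne : Nat.find he ≠ 0 := by
        intro hc
        have := Nat.find_spec he
        rw [hc, h0] at this
        simp at this
      obtain ⟨u, hu⟩ := Nat.exists_eq_succ_of_ne_zero hne
      rw [hu, hS]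
      simp
    | n + 1 =>
      show (spelledGet q (n + 1)).getD default = (spelledGet p n).getD default
      congr 1
      have hiff : (∃ t, n + 1 < (q t).length) ↔ (∃ t, n < (p t).length) := by
        constructor
        · rintro ⟨t, ht⟩
          match t with
          | 0 => rw [h0] at ht; simp at ht
          | t + 1 =>
            rw [hS] at ht
            exact ⟨t, by simpa using ht⟩
        · rintro ⟨t, ht⟩
          exact ⟨t + 1, by rw [hS]; simpa using ht⟩
      unfold spelledGet
      by_cases h1 : ∃ t, n + 1 < (q t).length
      · rw [dif_pos h1, dif_pos (hiff.mp h1)]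
        have hne : Nat.find h1 ≠ 0 := by
          intro hc
          have := Nat.find_spec h1
          rw [hc, h0] at this
          simp at this
        obtain ⟨u, hu⟩ := Nat.exists_eq_succ_of_ne_zero hne
        have hn1 : n < (p u).length := by
          have := Nat.find_spec h1
          rw [hu, hS] at this
          simpa using this
        have hn2 : n < (p (Nat.find (hiff.mp h1))).length := Nat.find_spec (hiff.mp h1)
        rw [hu, hS, List.getElem?_cons_succ]
        rcases le_total u (Nat.find (hiff.mp h1)) with h | h
        · exact (prefix_getElem?_eq (hmono _ _ h) hn1).symm
        · exact prefix_getElem?_eq (hmono _ _ h) hn2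
      · rw [dif_neg h1, dif_neg (fun hc => h1 (hiff.mpr hc))]

lemma spelled_contrM (M : BMEPM) (w : List Bool) (e : Valuation) (env : ℕ → List Move) :
    spelled ((contrM M w).pos e env) =
      consRun ⟨.top, .repl w⟩ (spelled (M.pos e (fun s => env (s + 1)))) :=
  spelled_cons _ _ _ (pos_mono M e _) rfl (contrM_pos M w e env)

--DEVEL

/-- Contraction is uniform-constructively sound. -/
theorem contraction_ucsound : UCSound ContractionRule := by
  classical
  refine ⟨fun _ X0 Ms =>
    contrM (Ms.headD ⟨fun _ _ _ => .think⟩) (rT (X0.ante.length - 1)), ?_⟩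
  intro Xs X0 Ms hR hlen I e hwins
  obtain ⟨E, G, F, rfl, rfl⟩ := hR
  have hM1 : Ms.length = 1 := by rw [hlen]; rfl
  obtain ⟨M, rfl⟩ := List.length_eq_one_iff.mp hM1
  have hMwins : M.WinsOn ((Sequent.mk (E ++ [G, G]) F).game I) e := by
    have := hwins 0 (by simp) (by simp)
    simpa using this
  have hm : ([M].headD ⟨fun _ _ _ => .think⟩) = M := rfl
  have hk : (Sequent.mk (E ++ [G]) F).ante.length - 1 = E.length := by simp
  beta_reduce
  rw [hm, hk]
  set As : List ConstGame := E.map fun A => A.game I e with hAs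
  set Gg : ConstGame := G.game I e with hGg
  set B : ConstGame := F.game I e with hB
  have hconcl : (Sequent.mk (E ++ [G]) F).game I e = dfb (stdOf (As ++ [Gg])) B := by
    rw [seq_game I e _ (by simp) F, List.map_append]
    rfl
  have hprem : (Sequent.mk (E ++ [G, G]) F).game I e = dfb (stdOf (As ++ [Gg, Gg])) B := by
    rw [seq_game I e _ (by simp) F, List.map_append]
    rfl
  intro env hNI
  set env' : ℕ → List Move := fun s => env (s + 1) with henv'
  have hsp : spelled ((contrM M (rT E.length)).pos e env) =
      consRun (lmR As.length) (spelled (M.pos e env')) := by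
    have := spelled_contrM M (rT E.length) e env
    rw [this]
    have hkk : As.length = E.length := by rw [hAs]; simp
    rw [hkk]
    rfl
  rw [hconcl, hsp] at hNI
  have hMNI : ¬ ((Sequent.mk (E ++ [G, G]) F).game I e).illegalFor .bot
      (spelled (M.pos e env')) := by
    rw [hprem]
    intro hill
    exact hNI (illegal_consRun As Gg B hill)
  obtain ⟨hfair, hwon⟩ := hMwins env' hMNI
  rw [hprem] at hwon
  constructor
  · exact contrM_fair M _ e env hfair
  · rw [hconcl, hsp]
    exact wonBy_consRun As Gg B hwon


end

end CoL
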